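/- A signed graph is balanced (every cycle has positive sign product) if and only if for every pair of vertices x, y (possibly equal), all chains (walks) between x and y have the same sign (product of edge signs). -/

import Mathlib

namespace SignedGraph

variable {V : Type*}

/-- The sign of a walk in a signed graph: the product of its edge signs. -/
def walkSign {G : SimpleGraph V} (σ : V → V → ℤˣ) : {u v : V} → G.Walk u v → ℤˣ
  | _, _, SimpleGraph.Walk.nil => 1
  | u, _, SimpleGraph.Walk.cons (v := w) _ p => σ u w * walkSign σ p

/-- A signed graph is balanced if every cycle has positive sign. -/
def Balanced (G : SimpleGraph V) (σ : V → V → ℤˣ) : Prop :=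
  ∀ ⦃u : V⦄ (c : G.Walk u u), c.IsCycle → walkSign σ c = 1

/-- Sign connection: every two distinct vertices are joined both by a
positive and by a negative walk. -/
def SignConnected (G : SimpleGraph V) (σ : V → V → ℤˣ) : Prop :=
  ∀ x y : V, x = y ∨
    ((∃ p : G.Walk x y, walkSign σ p = 1) ∧ (∃ p : G.Walk x y, walkSign σ p = -1))

open Classical in
/-- Switching by a vertex subset `W`: negate the signs of edges with exactly
one endpoint in `W`. -/
noncomputable def switchSign (W : Set V) (σ : V → V → ℤˣ) (u v : V) : ℤˣ :=
  if Xor' (u ∈ W) (v ∈ W) then -σ u v else σ u v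

end SignedGraph

open SignedGraph

section Aux

open SimpleGraph

variable {V : Type*} {G : SimpleGraph V} {σ : V → V → ℤˣ}

@[simp] lemma walkSign_nil {u : V} : walkSign σ (SimpleGraph.Walk.nil : G.Walk u u) = 1 := rfl

@[simp] lemma walkSign_cons {u w v : V} (h : G.Adj u w) (p : G.Walk w v) :
    walkSign σ (SimpleGraph.Walk.cons h p) = σ u w * walkSign σ p := rfl

lemma walkSign_append {u v w : V} (p : G.Walk u v) (q : G.Walk v w) :
    walkSign σ (p.append q) = walkSign σ p * walkSign σ q := by
  induction p with
  | nil => simp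
  | cons h p ih => simp [ih, mul_assoc]

lemma walkSign_reverse (hσ : ∀ u v : V, σ u v = σ v u) {u v : V} (p : G.Walk u v) :
    walkSign σ p.reverse = walkSign σ p := by
  induction p with
  | nil => rfl
  | @cons u w v h p ih =>
    rw [SimpleGraph.Walk.reverse_cons, walkSign_append, ih, walkSign_cons]
    simp only [walkSign_cons, walkSign_nil, mul_one]
    rw [hσ w u, mul_comm]

lemma length_eq_zero_of_closed_nodup {u : V} (q : G.Walk u u) (h : q.support.Nodup) :
    q.length = 0 := by
  cases q with
  | nil => rfl
  | cons ha q =>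
    simp only [SimpleGraph.Walk.support_cons, List.nodup_cons] at h
    exact absurd q.end_mem_support h.1

lemma length_eq_one_of_edge_mem {a b : V} (p : G.Walk a b) (hn : p.support.Nodup)
    (he : s(a, b) ∈ p.edges) : p.length = 1 := by
  induction p with
  | nil => simp at he
  | @cons a y b h q ih =>
    rw [SimpleGraph.Walk.edges_cons, List.mem_cons] at he
    rw [SimpleGraph.Walk.support_cons, List.nodup_cons] at hn
    rcases he with he | he
    · rw [Sym2.eq_iff] at he
      rcases he with ⟨-, rfl⟩ | ⟨rfl, rfl⟩
      · simp [length_eq_zero_of_closed_nodup q hn.2]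
      · exact absurd rfl h.ne
    · exact absurd (q.fst_mem_support_of_mem_edges he) hn.1

lemma exists_split {v : V} [DecidableEq V] (r : G.Walk v v)
    (h2 : 2 ≤ r.support.tail.count v) :
    ∃ (c1 c2 : G.Walk v v), c1.length < r.length ∧ c2.length < r.length ∧
      walkSign σ r = walkSign σ c1 * walkSign σ c2 := by
  cases r with
  | nil => simp at h2
  | @cons v w v h q =>
    rw [SimpleGraph.Walk.support_cons, List.tail_cons] at h2
    have hv : v ∈ q.support := by
      rw [← List.count_pos_iff]; omega
    have hspec := q.take_spec hv
    have hcount : (q.takeUntil v hv).support.count v = 1 :=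
      q.count_support_takeUntil_eq_one hv
    have hsupp : q.support =
        (q.takeUntil v hv).support ++ (q.dropUntil v hv).support.tail := by
      conv_lhs => rw [← hspec]
      exact SimpleGraph.Walk.support_append _ _
    have hdropcount : 1 ≤ ((q.dropUntil v hv).support.tail).count v := by
      rw [hsupp, List.count_append, hcount] at h2; omega
    have hdropne : ((q.dropUntil v hv).support.tail) ≠ [] := by
      intro hnil; rw [hnil] at hdropcount; simp at hdropcount
    have hdroplen : 1 ≤ (q.dropUntil v hv).length := by
      have := List.length_pos_iff.mpr hdropne
      rw [List.length_tail, SimpleGraph.Walk.length_support] at this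
      omega
    have hlen : q.length = (q.takeUntil v hv).length + (q.dropUntil v hv).length := by
      have := congrArg SimpleGraph.Walk.length hspec
      rw [SimpleGraph.Walk.length_append] at this
      omega
    refine ⟨SimpleGraph.Walk.cons h (q.takeUntil v hv), q.dropUntil v hv, ?_, ?_, ?_⟩
    · simp only [SimpleGraph.Walk.length_cons]; omega
    · simp only [SimpleGraph.Walk.length_cons]; omega
    · rw [walkSign_cons, walkSign_cons, mul_assoc]
      congr 1
      conv_lhs => rw [← hspec]
      exact walkSign_append _ _

lemma closed_walkSign (hσ : ∀ u v : V, σ u v = σ v u) (hB : Balanced G σ) :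
    ∀ (n : ℕ) {u : V} (c : G.Walk u u), c.length ≤ n → walkSign σ c = 1 := by
  intro n
  induction n with
  | zero =>
    intro u c hc
    cases c with
    | nil => rfl
    | cons h p => simp [SimpleGraph.Walk.length_cons] at hc
  | succ n ih =>
    intro u c hc
    classical
    by_cases hnd : c.support.tail.Nodup
    · cases c with
      | nil => rfl
      | @cons u w u h p =>
        rw [SimpleGraph.Walk.support_cons, List.tail_cons] at hnd
        by_cases he : s(u, w) ∈ p.edges
        · -- the edge u-w appears in p: then p has length 1
          have h1 : p.length = 1 := by
            apply length_eq_one_of_edge_mem p hnd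
            rwa [Sym2.eq_swap]
          cases p with
          | nil => simp at h1
          | @cons w y u h' q =>
            cases q with
            | nil =>
              rw [walkSign_cons, walkSign_cons, walkSign_nil, mul_one, hσ w u]
              exact Int.units_mul_self _
            | cons h'' q' => simp [SimpleGraph.Walk.length_cons] at h1
        · exact hB _ ((SimpleGraph.Walk.cons_isCycle_iff p h).mpr
            ⟨(SimpleGraph.Walk.isPath_def p).mpr hnd, he⟩)
    · obtain ⟨v, hv2⟩ : ∃ v, 2 ≤ c.support.tail.count v := by
        by_contra hno
        push_neg at hno
        exact hnd (List.nodup_iff_count_le_one.mpr fun a => by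
          have := hno a; omega)
      have hvmem : v ∈ c.support := by
        rw [SimpleGraph.Walk.support_eq_cons]
        exact List.mem_cons_of_mem _ (by rw [← List.count_pos_iff]; omega)
      set r := c.rotate v hvmem with hr
      have hrlen : r.length = c.length := by
        rw [hr, SimpleGraph.Walk.rotate, SimpleGraph.Walk.length_append]
        have := congrArg SimpleGraph.Walk.length (c.take_spec hvmem)
        rw [SimpleGraph.Walk.length_append] at this
        omega
      have hrsign : walkSign σ r = walkSign σ c := by
        rw [hr, SimpleGraph.Walk.rotate, walkSign_append, mul_comm, ← walkSign_append,
          c.take_spec hvmem]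
      have hrcount : 2 ≤ r.support.tail.count v := by
        have hperm : List.Perm r.support.tail c.support.tail :=
          (SimpleGraph.Walk.support_rotate c v hvmem).perm
        rw [hperm.count_eq]
        exact hv2
      obtain ⟨c1, c2, h1, h2, hs⟩ := exists_split (σ := σ) r hrcount
      rw [← hrsign, hs, ih c1 (by omega), ih c2 (by omega), mul_one]

end Aux

/-- A signed graph is balanced iff for every pair of vertices, all walks
between them have the same sign. -/
theorem stmt_0 {V : Type*} [Fintype V] (G : SimpleGraph V) (σ : V → V → ℤˣ)
    (hσ : ∀ u v : V, σ u v = σ v u) :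
    Balanced G σ ↔
      ∀ (x y : V) (p q : G.Walk x y), walkSign σ p = walkSign σ q := by
  constructor
  · intro hB x y p q
    have hclosed : walkSign σ (p.append q.reverse) = 1 :=
      closed_walkSign hσ hB (p.append q.reverse).length _ le_rfl
    rw [walkSign_append, walkSign_reverse hσ] at hclosed
    have hq : walkSign σ q * walkSign σ q = 1 := Int.units_mul_self _
    calc walkSign σ p = walkSign σ p * (walkSign σ q * walkSign σ q) := by
          rw [hq, mul_one]
      _ = (walkSign σ p * walkSign σ q) * walkSign σ q := by rw [mul_assoc]
      _ = walkSign σ q := by rw [hclosed, one_mul]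
  · intro h u c _
    exact h u u c SimpleGraph.Walk.nil
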